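/- Let H be a separable infinite-dimensional complex Hilbert space, M a nontrivial closed subspace of H, and (T_n)_{n≥1} a sequence of bounded linear operators on H. The following are equivalent: (i) (T_n) is subspace-disk topologically transitive with respect to M; (ii) for all nonempty relatively open subsets U ⊆ M and V ⊆ M there exist n ∈ ℕ and α ∈ ℂ with |α| ≥ 1 such that T_n⁻¹(α • U) ∩ V ≠ ∅ and T_n(M) ⊆ M; (iii) for all nonempty relatively open subsets U ⊆ M and V ⊆ M there exist n ∈ ℕ and α ∈ ℂ with |α| ≥ 1 such that T_n⁻¹(α • U) ∩ V is a nonempty relatively open subset of M. -/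

import Mathlib

open Pointwise

/-- A subset `S` of a Hilbert space is relatively open in the subspace `M`. -/
def RelOpenIn {H : Type*} [NormedAddCommGroup H] [InnerProductSpace ℂ H]
    (M : Submodule ℂ H) (S : Set H) : Prop :=
  IsOpen ((↑) ⁻¹' S : Set ↥M)

/-- `(T n)` is subspace-disk topologically transitive with respect to `M`. -/
def SubspaceDiskTransitive {H : Type*} [NormedAddCommGroup H] [InnerProductSpace ℂ H]
    (T : ℕ → H →L[ℂ] H) (M : Submodule ℂ H) : Prop :=
  ∀ U V : Set H, U ⊆ M → V ⊆ M → U.Nonempty → V.Nonempty →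
    RelOpenIn M U → RelOpenIn M V →
    ∃ (n : ℕ) (α : ℂ), 1 ≤ ‖α‖ ∧
      ∃ W : Set H, W ⊆ M ∧ W.Nonempty ∧ RelOpenIn M W ∧ W ⊆ (T n) ⁻¹' (α • U) ∩ V

/-- If a nonempty relatively open subset of `M` is mapped into `M` by a bounded
operator `T`, then `T` maps all of `M` into `M`. -/
lemma key_invariance {H : Type*} [NormedAddCommGroup H] [InnerProductSpace ℂ H]
    (M : Submodule ℂ H) (T : H →L[ℂ] H) (W : Set H) (hWM : W ⊆ M)
    (hWne : W.Nonempty) (hWo : RelOpenIn M W) (hTW : ∀ x ∈ W, T x ∈ M) :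
    T '' (M : Set H) ⊆ M := by
  rintro _ ⟨m, hm, rfl⟩
  obtain ⟨w, hw⟩ := hWne
  have hwM : w ∈ M := hWM hw
  -- the map ε ↦ w + ε • m, as a map into M
  set f : ℂ → ↥M := fun ε => ⟨w, hwM⟩ + ε • ⟨m, hm⟩ with hf
  have hfc : Continuous f := by
    apply Continuous.add continuous_const
    exact Continuous.smul continuous_id continuous_const
  have hopen : IsOpen (f ⁻¹' ((↑) ⁻¹' W : Set ↥M)) := hWo.preimage hfc
  have h0 : (0 : ℂ) ∈ f ⁻¹' ((↑) ⁻¹' W : Set ↥M) := by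
    simp [hf, hw]
  obtain ⟨δ, hδ, hball⟩ := Metric.isOpen_iff.1 hopen 0 h0
  set ε : ℂ := ((δ / 2 : ℝ) : ℂ) with hε
  have hεmem : ε ∈ Metric.ball (0 : ℂ) δ := by
    simp only [Metric.mem_ball, dist_zero_right, hε]
    rw [Complex.norm_real, Real.norm_eq_abs, abs_of_pos (by linarith)]
    linarith
  have hεW : w + ε • m ∈ W := hball hεmem
  have hεne : ε ≠ 0 := by
    simp only [hε, ne_eq, Complex.ofReal_eq_zero]
    positivity
  have h1 : T (w + ε • m) ∈ M := hTW _ hεW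
  have h2 : T w ∈ M := hTW _ hw
  have h3 : ε • T m ∈ M := by
    have : T (w + ε • m) - T w = ε • T m := by
      rw [map_add, map_smul]; abel
    rw [← this]
    exact M.sub_mem h1 h2
  have := M.smul_mem ε⁻¹ h3
  rwa [smul_smul, inv_mul_cancel₀ hεne, one_smul] at this

/-- equivalent formulations of subspace-disk topological transitivity. -/
theorem subspaceDiskTransitive_tfae
    {H : Type*} [NormedAddCommGroup H] [InnerProductSpace ℂ H] [CompleteSpace H]
    [TopologicalSpace.SeparableSpace H] (hinf : ¬ FiniteDimensional ℂ H)
    (M : Submodule ℂ H) (hMc : IsClosed (M : Set H)) (hM₁ : M ≠ ⊥) (hM₂ : M ≠ ⊤)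
    (T : ℕ → H →L[ℂ] H) :
    List.TFAE
      [SubspaceDiskTransitive T M,
       ∀ U V : Set H, U ⊆ M → V ⊆ M → U.Nonempty → V.Nonempty →
         RelOpenIn M U → RelOpenIn M V →
         ∃ (n : ℕ) (α : ℂ), 1 ≤ ‖α‖ ∧ ((T n) ⁻¹' (α • U) ∩ V).Nonempty ∧
           (T n) '' M ⊆ M,
       ∀ U V : Set H, U ⊆ M → V ⊆ M → U.Nonempty → V.Nonempty →
         RelOpenIn M U → RelOpenIn M V →
         ∃ (n : ℕ) (α : ℂ), 1 ≤ ‖α‖ ∧ ((T n) ⁻¹' (α • U) ∩ V).Nonempty ∧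
           RelOpenIn M ((T n) ⁻¹' (α • U) ∩ V)] := by
  tfae_have 1 → 2 := by
    intro h U V hU hV hUne hVne hUo hVo
    obtain ⟨n, α, hα, W, hWM, hWne, hWo, hWsub⟩ := h U V hU hV hUne hVne hUo hVo
    have hαne : α ≠ 0 := by
      intro h0; rw [h0, norm_zero] at hα; linarith
    have hαUM : (α • U : Set H) ⊆ M := by
      rintro _ ⟨u, hu, rfl⟩
      exact M.smul_mem α (hU hu)
    refine ⟨n, α, hα, hWne.mono hWsub, ?_⟩
    exact key_invariance M (T n) W hWM hWne hWo
      (fun x hx => hαUM (hWsub hx).1)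
  tfae_have 2 → 3 := by
    intro h U V hU hV hUne hVne hUo hVo
    obtain ⟨n, α, hα, hne, hTM⟩ := h U V hU hV hUne hVne hUo hVo
    have hαne : α ≠ 0 := by
      intro h0; rw [h0, norm_zero] at hα; linarith
    refine ⟨n, α, hα, hne, ?_⟩
    -- the restriction of T n to M, as a map M → M
    set g : ↥M → ↥M := fun x => ⟨T n x, hTM ⟨x, x.2, rfl⟩⟩ with hg
    have hgc : Continuous g := by
      apply Continuous.subtype_mk
      exact (T n).continuous.comp continuous_subtype_val
    have hαUo : IsOpen ((↑) ⁻¹' (α • U) : Set ↥M) := by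
      have : ((↑) ⁻¹' (α • U) : Set ↥M)
          = (fun x : ↥M => α⁻¹ • x) ⁻¹' ((↑) ⁻¹' U : Set ↥M) := by
        ext x
        simp only [Set.mem_preimage, Submodule.coe_smul]
        exact Set.mem_smul_set_iff_inv_smul_mem₀ hαne _ _
      rw [this]
      exact hUo.preimage ((continuous_const : Continuous fun _ : ↥M => α⁻¹).smul continuous_id)
    show IsOpen ((↑) ⁻¹' ((T n) ⁻¹' (α • U) ∩ V) : Set ↥M)
    have heq : ((↑) ⁻¹' ((T n) ⁻¹' (α • U) ∩ V) : Set ↥M)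
        = g ⁻¹' ((↑) ⁻¹' (α • U) : Set ↥M) ∩ ((↑) ⁻¹' V : Set ↥M) := by
      ext x
      simp [hg]
    rw [heq]
    exact (hαUo.preimage hgc).inter hVo
  tfae_have 3 → 1 := by
    intro h U V hU hV hUne hVne hUo hVo
    obtain ⟨n, α, hα, hne, ho⟩ := h U V hU hV hUne hVne hUo hVo
    exact ⟨n, α, hα, (T n) ⁻¹' (α • U) ∩ V,
      fun x hx => hV hx.2, hne, ho, subset_rfl⟩
  tfae_finish
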